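/- Let T be the quartet tree metric (12|34) on 4 taxa with pendant weights e₁,e₂,e₃,e₄ > 0 and internal weight g > 0 (so T(1,2)=e₁+e₂, T(3,4)=e₃+e₄, T(i,j)=e_i+g+e_j for i∈{1,2}, j∈{3,4}), and assume e₁ > g and e₂ > g. Let u and w be real parameters with 0 ≤ u < e₁−g and 0 > w > −2·min(e₂−g, e₃, e₄). Define star tree metrics D with pendant weights a=e₁−g−u, d=e₂+g, c=e₃, e=e₄ at leaves 1,2,3,4 and D̄ with pendant weights ā=e₁+g−w/2, d̄=e₂−g+w/2, c̄=e₃+w/2, ē=e₄+w/2 at leaves 1,2,3,4. Then all eight of these weights are positive, and the tropical mixture D⊕D̄ equals T. -/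
import Mathlib

/-- The star tree metric determined by pendant weights `a`. -/
def starMetricOf {n : ℕ} (a : Fin n → ℝ) : Fin n → Fin n → ℝ :=
  fun i j => if i = j then 0 else a i + a j

/-- The quartet tree metric (12|34) on 4 taxa with pendant weights `e` and internal
edge weight `g`: leaves `0,1` on one side, leaves `2,3` on the other. -/
def quartetMetric (e : Fin 4 → ℝ) (g : ℝ) : Fin 4 → Fin 4 → ℝ :=
  fun i j => if i = j then 0
    else e i + e j + (if decide (i.val < 2) ≠ decide (j.val < 2) then g else 0)

/-- Case 1.1: for the quartet (12|34) with `e₁ > g` and `e₂ > g`, and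
parameters `0 ≤ u < e₁−g`, `0 > w > −2·min(e₂−g,e₃,e₄)`, the star tree metrics with
pendant weights `(e₁−g−u, e₂+g, e₃, e₄)` and
`(e₁+g−w/2, e₂−g+w/2, e₃+w/2, e₄+w/2)` have all weights positive and their
tropical mixture equals the quartet metric. -/
theorem quartet_mixture_case_1_1 (e : Fin 4 → ℝ) (he : ∀ i, 0 < e i)
    (g : ℝ) (hg : 0 < g) (h1 : g < e 0) (h2 : g < e 1)
    (u w : ℝ) (hu0 : 0 ≤ u) (hu1 : u < e 0 - g)
    (hw0 : w < 0) (hw1 : -2 * min (e 1 - g) (min (e 2) (e 3)) < w) :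
    (∀ i, 0 < ![e 0 - g - u, e 1 + g, e 2, e 3] i) ∧
    (∀ i, 0 < ![e 0 + g - w / 2, e 1 - g + w / 2,
                e 2 + w / 2, e 3 + w / 2] i) ∧
    (∀ i j, max (starMetricOf ![e 0 - g - u, e 1 + g, e 2, e 3] i j)
        (starMetricOf ![e 0 + g - w / 2, e 1 - g + w / 2,
          e 2 + w / 2, e 3 + w / 2] i j) = quartetMetric e g i j) := by
  have hm1 : -2 * (e 1 - g) < w := by
    have := min_le_left (e 1 - g) (min (e 2) (e 3))
    nlinarith
  have hm2 : -2 * e 2 < w := by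
    have h := le_trans (min_le_right (e 1 - g) (min (e 2) (e 3))) (min_le_left (e 2) (e 3))
    nlinarith
  have hm3 : -2 * e 3 < w := by
    have h := le_trans (min_le_right (e 1 - g) (min (e 2) (e 3))) (min_le_right (e 2) (e 3))
    nlinarith
  have h0 := he 0; have h1' := he 1; have h2' := he 2; have h3' := he 3
  refine ⟨?_, ?_, ?_⟩
  · intro i; fin_cases i <;> simp <;> linarith
  · intro i; fin_cases i <;> simp <;> linarith
  · intro i j
    fin_cases i <;> fin_cases j <;>
      simp [starMetricOf, quartetMetric] <;>
      first
        | linarith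
        | (rw [max_eq_left (by linarith)]; ring)
        | (rw [max_eq_right (by linarith)]; ring)
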